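/- arXiv:1401.3390 — 5 statements merged into one kernel-verified Lean document; each statement's English description precedes it below -/
import Mathlib

section
/- For every ε > 0, the probability that the maximum calibration error exceeds ε satisfies P(MCE ≥ ε) ≤ 2B·exp(−Nε²/(2B)) (equivalently, since N = nB, P(MCE ≥ ε) ≤ 2B·exp(−nε²/2)). -/
open MeasureTheory ProbabilityTheory Finset

/-- Empirical estimate of input bin `t`: the average of the `n` samples in that bin. -/
noncomputable def binEst {Ω : Type*} {B n : ℕ} (X : Fin B × Fin n → Ω → ℝ)
    (t : Fin B) (ω : Ω) : ℝ :=
  (n : ℝ)⁻¹ * ∑ s : Fin n, X (t, s) ω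

/-- Weighted average of the values `v t` over the input bins mapped to output bin `j`. -/
noncomputable def binAvg {B J : ℕ} (g : Fin B → Fin J) (α : Fin B → ℝ)
    (v : Fin B → ℝ) (j : Fin J) : ℝ :=
  (∑ t ∈ univ.filter (fun t => g t = j), α t * v t) /
    (∑ t ∈ univ.filter (fun t => g t = j), α t)

/-- Maximum calibration error: the largest deviation, over output bins `j`, between the
weighted average `o_j` of the true bin values and the weighted average `e_j` of the
empirical bin estimates. -/
noncomputable def MCE {Ω : Type*} {B n J : ℕ} (g : Fin B → Fin J) (α θ : Fin B → ℝ)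
    (X : Fin B × Fin n → Ω → ℝ) (ω : Ω) : ℝ :=
  ⨆ j : Fin J, |binAvg g α θ j - binAvg g α (fun t => binEst X t ω) j|

open Real in
lemma mylog_bound (θ : ℝ) (hθ0 : 0 ≤ θ) (hθ1 : θ ≤ 1) {c : ℝ} (hc : 0 ≤ c) :
    1 - θ + θ * Real.exp c ≤ Real.exp (c * θ + c ^ 2 / 2) := by
  have hD : ∀ x : ℝ, 0 < 1 - θ + θ * Real.exp x := by
    intro x
    rcases hθ0.eq_or_lt with h | h
    · simp [← h]
    · have := Real.exp_pos x
      nlinarith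
  set f : ℝ → ℝ := fun x => x * θ + x ^ 2 / 2 - Real.log (1 - θ + θ * Real.exp x) with hf
  have hderiv : ∀ x : ℝ, HasDerivAt f
      (θ + x - θ * Real.exp x / (1 - θ + θ * Real.exp x)) x := by
    intro x
    have h1 : HasDerivAt (fun x : ℝ => x * θ + x ^ 2 / 2) (θ + x) x := by
      have := ((hasDerivAt_id x).mul_const θ).add
        (((hasDerivAt_pow 2 x)).div_const 2)
      exact this.congr_deriv (by norm_num)
    have h2 : HasDerivAt (fun x : ℝ => 1 - θ + θ * Real.exp x) (θ * Real.exp x) x :=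
      ((Real.hasDerivAt_exp x).const_mul θ).const_add (1 - θ)
    have h3 := h2.log (hD x).ne'
    exact h1.sub h3
  have hmono : MonotoneOn f (Set.Ici 0) := by
    refine monotoneOn_of_deriv_nonneg (convex_Ici 0) ?_ ?_ ?_
    · exact (fun x _ => ((hderiv x).differentiableAt).continuousAt.continuousWithinAt)
    · intro x _
      exact (hderiv x).differentiableAt.differentiableWithinAt
    · intro x hx
      rw [interior_Ici] at hx
      rw [(hderiv x).deriv]
      have hD' := hD x
      have hx0 : (0:ℝ) ≤ x := le_of_lt hx
      have hkey : θ * Real.exp x ≤ (θ + x) * (1 - θ + θ * Real.exp x) := by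
        have hex := Real.exp_pos x
        have he : Real.exp x - 1 ≤ x * Real.exp x := by
          have hprod : Real.exp (-x) * Real.exp x = 1 := by
            rw [← Real.exp_add]; simp
          nlinarith [mul_le_mul_of_nonneg_right (Real.add_one_le_exp (-x)) hex.le]
        have h1 : θ * (1 - θ) * (Real.exp x - 1) ≤ θ * (1 - θ) * (x * Real.exp x) :=
          mul_le_mul_of_nonneg_left he (mul_nonneg hθ0 (sub_nonneg.2 hθ1))
        have h2 : θ * (1 - θ) * (x * Real.exp x) ≤ θ * (x * Real.exp x) := by
          nlinarith [mul_nonneg (mul_nonneg hθ0 hθ0) (mul_nonneg hx0 hex.le)]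
        have h3 : 0 ≤ x * (1 - θ) := mul_nonneg hx0 (sub_nonneg.2 hθ1)
        nlinarith [h1, h2, h3]
      have : θ * Real.exp x / (1 - θ + θ * Real.exp x) ≤ θ + x := by
        rw [div_le_iff₀ hD']
        exact hkey
      linarith
  have h0 : f 0 = 0 := by simp [hf]
  have := hmono (Set.self_mem_Ici) (Set.mem_Ici.2 hc) hc
  rw [h0] at this
  have hlog : Real.log (1 - θ + θ * Real.exp c) ≤ c * θ + c ^ 2 / 2 := by
    simp only [hf] at this; linarith
  calc 1 - θ + θ * Real.exp c = Real.exp (Real.log (1 - θ + θ * Real.exp c)) :=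
        (Real.exp_log (hD c)).symm
    _ ≤ _ := Real.exp_le_exp.2 hlog


lemma mylog_bound_all (θ : ℝ) (hθ0 : 0 ≤ θ) (hθ1 : θ ≤ 1) (t : ℝ) :
    1 - θ + θ * Real.exp t ≤ Real.exp (t * θ + t ^ 2 / 2) := by
  rcases le_or_gt 0 t with h | h
  · exact mylog_bound θ hθ0 hθ1 h
  · have h' := mylog_bound (1 - θ) (by linarith) (by linarith) (c := -t) (by linarith)
    have := mul_le_mul_of_nonneg_right h' (Real.exp_pos t).le
    calc 1 - θ + θ * Real.exp t
        = (1 - (1 - θ) + (1 - θ) * Real.exp (-t)) * Real.exp t := by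
          have hp : Real.exp (-t) * Real.exp t = 1 := by rw [← Real.exp_add]; simp
          linear_combination (θ - 1) * hp
      _ ≤ Real.exp (-t * (1 - θ) + (-t) ^ 2 / 2) * Real.exp t := this
      _ = Real.exp (t * θ + t ^ 2 / 2) := by rw [← Real.exp_add]; congr 1; ring

lemma iIndepFun_precomp {Ω ι κ : Type*} [MeasurableSpace Ω] {μ : Measure Ω}
    [Nonempty κ] {X : ι → Ω → ℝ} (u : κ → ι) (hu : Function.Injective u)
    (h : iIndepFun X μ) :
    iIndepFun (fun k => X (u k)) μ := by
  classical
  rw [iIndepFun_iff_measure_inter_preimage_eq_mul] at h ⊢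
  intro S sets H
  have hli : Function.LeftInverse (Function.invFun u) u := Function.leftInverse_invFun hu
  have key := h (S.image u) (sets := fun i => sets (Function.invFun u i)) ?_
  · calc μ (⋂ k ∈ S, X (u k) ⁻¹' sets k)
        = μ (⋂ i ∈ S.image u, X i ⁻¹' sets (Function.invFun u i)) := by
          congr 1
          rw [Finset.set_biInter_finset_image]
          refine Set.iInter₂_congr fun k _ => by rw [hli k]
      _ = ∏ i ∈ S.image u, μ (X i ⁻¹' sets (Function.invFun u i)) := key
      _ = ∏ k ∈ S, μ (X (u k) ⁻¹' sets k) := by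
          rw [Finset.prod_image (fun a _ b _ hab => hu hab)]
          exact Finset.prod_congr rfl fun k _ => by rw [hli k]
  · intro i hi
    obtain ⟨k, hk, rfl⟩ := Finset.mem_image.1 hi
    simpa [hli k] using H k hk

lemma bern_integrable {Ω : Type*} [MeasurableSpace Ω] (μ : Measure Ω)
    [IsProbabilityMeasure μ] {Y : Ω → ℝ} (h01 : ∀ ω, Y ω = 0 ∨ Y ω = 1)
    (hm : Measurable Y) : Integrable Y μ := by
  refine Integrable.mono' (integrable_const 1) hm.aestronglyMeasurable ?_
  filter_upwards with ω
  rcases h01 ω with h | h <;> simp [h]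

lemma bern_mgf {Ω : Type*} [MeasurableSpace Ω] (μ : Measure Ω)
    [IsProbabilityMeasure μ] {Y : Ω → ℝ} {θ : ℝ} (h01 : ∀ ω, Y ω = 0 ∨ Y ω = 1)
    (hm : Measurable Y) (hmean : ∫ ω, Y ω ∂μ = θ) (t : ℝ) :
    mgf Y μ t = 1 - θ + θ * Real.exp t := by
  have hfun : ∀ ω, Real.exp (t * Y ω) = 1 + (Real.exp t - 1) * Y ω := by
    intro ω
    rcases h01 ω with h | h <;> simp [h]
  rw [mgf]
  calc ∫ ω, Real.exp (t * Y ω) ∂μ = ∫ ω, (1 + (Real.exp t - 1) * Y ω) ∂μ := by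
        exact integral_congr_ae (Filter.Eventually.of_forall hfun)
    _ = 1 - θ + θ * Real.exp t := by
        rw [integral_add (integrable_const 1)
          ((bern_integrable μ h01 hm).const_mul _), integral_const_mul, hmean]
        simp; ring

lemma bin_tail {Ω : Type*} [MeasurableSpace Ω] (μ : Measure Ω) [IsProbabilityMeasure μ]
    (n : ℕ) (hn : 1 ≤ n) {θ : ℝ} (hθ0 : 0 ≤ θ) (hθ1 : θ ≤ 1)
    (Y : Fin n → Ω → ℝ) (h01 : ∀ s ω, Y s ω = 0 ∨ Y s ω = 1)
    (hm : ∀ s, Measurable (Y s))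
    (hind : iIndepFun Y μ)
    (hmean : ∀ s, ∫ ω, Y s ω ∂μ = θ)
    {ε : ℝ} (hε : 0 < ε) :
    μ {ω | ε ≤ |θ - (n : ℝ)⁻¹ * ∑ s, Y s ω|}
      ≤ ENNReal.ofReal (2 * Real.exp (-((n : ℝ) * ε ^ 2) / 2)) := by
  have hn' : (0 : ℝ) < n := by exact_mod_cast hn
  set S : Ω → ℝ := ∑ s : Fin n, Y s with hS
  have hSapp : ∀ ω, S ω = ∑ s, Y s ω := fun ω => by simp [hS, Finset.sum_apply]
  have hSmeas : Measurable S := by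
    have h1 : Measurable fun ω => ∑ s, Y s ω := Finset.measurable_sum _ fun s _ => hm s
    have h2 : S = fun ω => ∑ s, Y s ω := funext hSapp
    rw [h2]; exact h1
  have hSbound : ∀ ω, 0 ≤ S ω ∧ S ω ≤ n := by
    intro ω
    rw [hSapp]
    constructor
    · exact Finset.sum_nonneg fun s _ => by rcases h01 s ω with h | h <;> simp [h]
    · calc ∑ s, Y s ω ≤ ∑ _s : Fin n, (1 : ℝ) :=
            Finset.sum_le_sum fun s _ => by rcases h01 s ω with h | h <;> simp [h]
        _ = n := by simp
  have hint : ∀ t : ℝ, Integrable (fun ω => Real.exp (t * S ω)) μ := by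
    intro t
    refine Integrable.mono' (integrable_const (Real.exp (|t| * n)))
      ((hSmeas.const_mul t).exp).aestronglyMeasurable ?_
    filter_upwards with ω
    rw [Real.norm_eq_abs, Real.abs_exp]
    refine Real.exp_le_exp.2 ?_
    obtain ⟨h0, h1⟩ := hSbound ω
    rcases le_or_gt 0 t with ht | ht
    · calc t * S ω ≤ t * n := by nlinarith
        _ ≤ |t| * n := by nlinarith [le_abs_self t]
    · calc t * S ω ≤ 0 := by nlinarith
        _ ≤ |t| * n := by positivity
  have hmgf : ∀ t : ℝ, mgf S μ t ≤ Real.exp ((n : ℝ) * (t * θ + t ^ 2 / 2)) := by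
    intro t
    have hbase : (0 : ℝ) ≤ 1 - θ + θ * Real.exp t := by
      nlinarith [Real.exp_pos t]
    calc mgf S μ t = ∏ s : Fin n, mgf (Y s) μ t := hind.mgf_sum hm Finset.univ
      _ = (1 - θ + θ * Real.exp t) ^ n := by
          rw [Finset.prod_congr rfl fun s _ => bern_mgf μ (h01 s) (hm s) (hmean s) t]
          simp [Finset.prod_const, Finset.card_univ]
      _ ≤ (Real.exp (t * θ + t ^ 2 / 2)) ^ n :=
          pow_le_pow_left₀ hbase (mylog_bound_all θ hθ0 hθ1 t) n
      _ = Real.exp ((n : ℝ) * (t * θ + t ^ 2 / 2)) := by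
          rw [← Real.exp_nat_mul]
  have hup : (μ {ω | (n : ℝ) * (θ + ε) ≤ S ω}).toReal ≤ Real.exp (-((n : ℝ) * ε ^ 2) / 2) := by
    calc (μ {ω | (n : ℝ) * (θ + ε) ≤ S ω}).toReal
        ≤ Real.exp (-ε * ((n : ℝ) * (θ + ε))) * mgf S μ ε :=
          measure_ge_le_exp_mul_mgf ((n : ℝ) * (θ + ε)) hε.le (hint ε)
      _ ≤ Real.exp (-ε * ((n : ℝ) * (θ + ε))) * Real.exp ((n : ℝ) * (ε * θ + ε ^ 2 / 2)) := by
          exact mul_le_mul_of_nonneg_left (hmgf ε) (Real.exp_pos _).le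
      _ = Real.exp (-((n : ℝ) * ε ^ 2) / 2) := by
          rw [← Real.exp_add]; congr 1; ring
  have hlo : (μ {ω | S ω ≤ (n : ℝ) * (θ - ε)}).toReal ≤ Real.exp (-((n : ℝ) * ε ^ 2) / 2) := by
    calc (μ {ω | S ω ≤ (n : ℝ) * (θ - ε)}).toReal
        ≤ Real.exp (-(-ε) * ((n : ℝ) * (θ - ε))) * mgf S μ (-ε) :=
          measure_le_le_exp_mul_mgf ((n : ℝ) * (θ - ε)) (neg_nonpos.2 hε.le) (hint (-ε))
      _ ≤ Real.exp (ε * ((n : ℝ) * (θ - ε))) * Real.exp ((n : ℝ) * (-ε * θ + (-ε) ^ 2 / 2)) := by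
          rw [neg_neg]
          exact mul_le_mul_of_nonneg_left (hmgf (-ε)) (Real.exp_pos _).le
      _ = Real.exp (-((n : ℝ) * ε ^ 2) / 2) := by
          rw [← Real.exp_add]; congr 1; ring
  have hsub : {ω | ε ≤ |θ - (n : ℝ)⁻¹ * ∑ s, Y s ω|}
      ⊆ {ω | (n : ℝ) * (θ + ε) ≤ S ω} ∪ {ω | S ω ≤ (n : ℝ) * (θ - ε)} := by
    intro ω hω
    simp only [Set.mem_setOf_eq] at hω
    rw [← hSapp] at hω
    rcases le_abs.1 hω with h | h
    · right
      simp only [Set.mem_setOf_eq]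
      have : (n : ℝ)⁻¹ * S ω ≤ θ - ε := by linarith
      calc S ω = (n : ℝ) * ((n : ℝ)⁻¹ * S ω) := by
            field_simp
        _ ≤ (n : ℝ) * (θ - ε) := by nlinarith
    · left
      simp only [Set.mem_setOf_eq]
      have : θ + ε ≤ (n : ℝ)⁻¹ * S ω := by linarith
      calc (n : ℝ) * (θ + ε) ≤ (n : ℝ) * ((n : ℝ)⁻¹ * S ω) := by nlinarith
        _ = S ω := by field_simp
  calc μ {ω | ε ≤ |θ - (n : ℝ)⁻¹ * ∑ s, Y s ω|}
      ≤ μ ({ω | (n : ℝ) * (θ + ε) ≤ S ω} ∪ {ω | S ω ≤ (n : ℝ) * (θ - ε)}) :=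
        measure_mono hsub
    _ ≤ μ {ω | (n : ℝ) * (θ + ε) ≤ S ω} + μ {ω | S ω ≤ (n : ℝ) * (θ - ε)} :=
        measure_union_le _ _
    _ ≤ ENNReal.ofReal (Real.exp (-((n : ℝ) * ε ^ 2) / 2))
        + ENNReal.ofReal (Real.exp (-((n : ℝ) * ε ^ 2) / 2)) := by
        gcongr
        · rw [← ENNReal.ofReal_toReal (measure_ne_top μ _)]
          exact ENNReal.ofReal_le_ofReal hup
        · rw [← ENNReal.ofReal_toReal (measure_ne_top μ _)]
          exact ENNReal.ofReal_le_ofReal hlo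
    _ = ENNReal.ofReal (2 * Real.exp (-((n : ℝ) * ε ^ 2) / 2)) := by
        rw [← ENNReal.ofReal_add (Real.exp_pos _).le (Real.exp_pos _).le]
        congr 1; ring

/-- **MCE tail bound**: for every `ε > 0`,
`P(MCE ≥ ε) ≤ 2B · exp(−Nε²/(2B)) = 2B · exp(−nε²/2)` (with `N = nB`). -/
theorem mce_tail_bound
    {Ω : Type*} [MeasurableSpace Ω] (μ : Measure Ω) [IsProbabilityMeasure μ]
    (B n : ℕ) (hB : 1 ≤ B) (hn : 1 ≤ n)
    (θ : Fin B → ℝ) (hθ : ∀ t, θ t ∈ Set.Icc (0 : ℝ) 1)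
    (X : Fin B × Fin n → Ω → ℝ)
    (hX01 : ∀ p ω, X p ω = 0 ∨ X p ω = 1)
    (hXmeas : ∀ p, Measurable (X p))
    (hindep : iIndepFun X μ)
    (hmean : ∀ t s, ∫ ω, X (t, s) ω ∂μ = θ t)
    (J : ℕ) (g : Fin B → Fin J) (hg : Function.Surjective g)
    (α : Fin B → ℝ) (hα : ∀ t, 0 < α t)
    (ε : ℝ) (hε : 0 < ε) :
    μ {ω | ε ≤ MCE g α θ X ω}
      ≤ ENNReal.ofReal (2 * B * Real.exp (-((n * B : ℝ) * ε ^ 2) / (2 * B))) := by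
  haveI : Nonempty (Fin n) := ⟨⟨0, hn⟩⟩
  haveI : Nonempty (Fin B) := ⟨⟨0, hB⟩⟩
  haveI : Nonempty (Fin J) := ⟨g ⟨0, hB⟩⟩
  -- per-bin tail bound
  have hbin : ∀ t : Fin B, μ {ω | ε ≤ |θ t - binEst X t ω|}
      ≤ ENNReal.ofReal (2 * Real.exp (-((n : ℝ) * ε ^ 2) / 2)) := by
    intro t
    have hu : Function.Injective (fun s : Fin n => ((t, s) : Fin B × Fin n)) := by
      intro a b hab
      exact congrArg Prod.snd hab
    have hind_t := iIndepFun_precomp _ hu hindep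
    have := bin_tail μ n hn (hθ t).1 (hθ t).2 (fun s => X (t, s))
      (fun s ω => hX01 (t, s) ω) (fun s => hXmeas (t, s)) hind_t
      (fun s => hmean t s) hε
    simpa [binEst] using this
  -- inclusion into union of per-bin events
  have hsub : {ω | ε ≤ MCE g α θ X ω} ⊆ ⋃ t : Fin B, {ω | ε ≤ |θ t - binEst X t ω|} := by
    intro ω hω
    simp only [Set.mem_setOf_eq] at hω
    obtain ⟨j, hj⟩ := Finite.exists_max
      (fun j : Fin J => |binAvg g α θ j - binAvg g α (fun t => binEst X t ω) j|)
    have hMj : MCE g α θ X ω ≤ |binAvg g α θ j - binAvg g α (fun t => binEst X t ω) j| :=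
      ciSup_le hj
    have hj' : ε ≤ |binAvg g α θ j - binAvg g α (fun t => binEst X t ω) j| :=
      le_trans hω hMj
    set F := univ.filter (fun t => g t = j) with hF
    have hFne : F.Nonempty := by
      obtain ⟨t0, ht0⟩ := hg j
      exact ⟨t0, by simp [hF, ht0]⟩
    have hW : 0 < ∑ t ∈ F, α t := Finset.sum_pos (fun t _ => hα t) hFne
    have hdiff : binAvg g α θ j - binAvg g α (fun t => binEst X t ω) j
        = (∑ t ∈ F, α t * (θ t - binEst X t ω)) / (∑ t ∈ F, α t) := by
      rw [binAvg, binAvg, div_sub_div_same]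
      congr 1
      rw [← Finset.sum_sub_distrib]
      exact Finset.sum_congr rfl fun t _ => by ring
    by_contra hcon
    simp only [Set.mem_iUnion, Set.mem_setOf_eq, not_exists, not_le] at hcon
    have habs : |∑ t ∈ F, α t * (θ t - binEst X t ω)| < ε * ∑ t ∈ F, α t := by
      calc |∑ t ∈ F, α t * (θ t - binEst X t ω)|
          ≤ ∑ t ∈ F, |α t * (θ t - binEst X t ω)| := Finset.abs_sum_le_sum_abs _ _
        _ = ∑ t ∈ F, α t * |θ t - binEst X t ω| := by
            exact Finset.sum_congr rfl fun t _ => by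
              rw [abs_mul, abs_of_pos (hα t)]
        _ < ∑ t ∈ F, α t * ε :=
            Finset.sum_lt_sum_of_nonempty hFne fun t _ =>
              mul_lt_mul_of_pos_left (hcon t) (hα t)
        _ = ε * ∑ t ∈ F, α t := by rw [← Finset.sum_mul]; ring
    rw [hdiff, abs_div, abs_of_pos hW, le_div_iff₀ hW] at hj'
    nlinarith
  -- combine
  have hBne : (B : ℝ) ≠ 0 := by positivity
  calc μ {ω | ε ≤ MCE g α θ X ω}
      ≤ μ (⋃ t : Fin B, {ω | ε ≤ |θ t - binEst X t ω|}) := measure_mono hsub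
    _ ≤ ∑' t : Fin B, μ {ω | ε ≤ |θ t - binEst X t ω|} := measure_iUnion_le _
    _ ≤ ∑' t : Fin B, ENNReal.ofReal (2 * Real.exp (-((n : ℝ) * ε ^ 2) / 2)) := by
        rw [tsum_fintype, tsum_fintype]
        exact Finset.sum_le_sum fun t _ => hbin t
    _ = (B : ENNReal) * ENNReal.ofReal (2 * Real.exp (-((n : ℝ) * ε ^ 2) / 2)) := by
        rw [tsum_fintype, Finset.sum_const, Finset.card_univ, Fintype.card_fin,
          nsmul_eq_mul]
    _ = ENNReal.ofReal (2 * B * Real.exp (-((n * B : ℝ) * ε ^ 2) / (2 * B))) := by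
        rw [← ENNReal.ofReal_natCast B, ← ENNReal.ofReal_mul (by positivity)]
        congr 1
        have hexp : -((n * B : ℝ) * ε ^ 2) / (2 * B) = -((n : ℝ) * ε ^ 2) / 2 := by
          field_simp
        rw [hexp]
        ring
end

section
/- For every δ ∈ (0,1) there exists a constant C > 0, depending only on δ, such that for all B ≥ 2 and all n ≥ 1 (with N = nB), with probability at least 1 − δ the maximum calibration error satisfies MCE ≤ C·√(B·log B / N); that is, MCE converges to zero at rate O(√(B log B / N)). -/
open MeasureTheory ProbabilityTheory Finset

lemma exp_sub_one_sub_le {x : ℝ} (hx : |x| ≤ 1) : Real.exp x - 1 - x ≤ x^2 := by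
  have h := Real.exp_bound hx (n := 2) (by norm_num)
  simp [Finset.sum_range_succ] at h
  nlinarith [abs_le.mp h, sq_abs x, sq_nonneg x]

lemma integrable_exp_of_bounded {Ω : Type*} [MeasurableSpace Ω] {μ : Measure Ω} [IsFiniteMeasure μ]
    {f : Ω → ℝ} (hm : Measurable f) {c : ℝ} (hb : ∀ ω, |f ω| ≤ c) :
    Integrable (fun ω => Real.exp (f ω)) μ := by
  refine ⟨hm.exp.aestronglyMeasurable, HasFiniteIntegral.of_bounded (C := Real.exp c)
    (ae_of_all _ fun ω => ?_)⟩
  rw [Real.norm_eq_abs, abs_of_pos (Real.exp_pos _)]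
  exact Real.exp_le_exp.2 ((le_abs_self _).trans (hb ω))

lemma mgf_of_bernoulli {Ω : Type*} [MeasurableSpace Ω] {μ : Measure Ω} [IsProbabilityMeasure μ]
    {Y : Ω → ℝ} (hm : Measurable Y) (h01 : ∀ ω, Y ω = 0 ∨ Y ω = 1) (η : ℝ) :
    mgf Y μ η = 1 + (∫ ω, Y ω ∂μ) * (Real.exp η - 1) := by
  have hint : Integrable Y μ :=
    ⟨hm.aestronglyMeasurable, HasFiniteIntegral.of_bounded (C := 1)
      (ae_of_all _ fun ω => by rcases h01 ω with h | h <;> simp [h])⟩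
  have hpt : ∀ ω, Real.exp (η * Y ω) = 1 + (Real.exp η - 1) * Y ω := fun ω => by
    rcases h01 ω with h | h <;> simp [h]
  rw [mgf]
  simp only [hpt]
  rw [integral_add (integrable_const 1) (hint.const_mul _), integral_const,
    MeasureTheory.integral_const_mul]
  simp [measure_univ]
  ring

lemma chernoff_bernoulli {Ω : Type*} [MeasurableSpace Ω] {μ : Measure Ω} [IsProbabilityMeasure μ]
    {B n : ℕ} (hn : 1 ≤ n) {X : Fin B × Fin n → Ω → ℝ}
    (h01 : ∀ p ω, X p ω = 0 ∨ X p ω = 1) (hXm : ∀ p, Measurable (X p))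
    (hind : iIndepFun X μ)
    {θ : Fin B → ℝ} (hθ : ∀ t, θ t ∈ Set.Icc (0:ℝ) 1)
    (hmean : ∀ t s, ∫ ω, X (t, s) ω ∂μ = θ t)
    (t : Fin B) {ξ : ℝ} (hξ : ξ = 1 ∨ ξ = -1) {ε : ℝ} (hε0 : 0 ≤ ε) (hε2 : ε ≤ 2) :
    μ {ω | (n:ℝ)*ε ≤ ξ * ((∑ s : Fin n, X (t,s) ω) - n * θ t)} ≤
      ENNReal.ofReal (Real.exp (-((n:ℝ) * ε^2 / 4))) := by
  have hξabs : |ξ| = 1 := by rcases hξ with h | h <;> simp [h]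
  set l : ℝ := ε / 2 with hl
  have hl0 : 0 ≤ l := by positivity
  have hl1 : l ≤ 1 := by rw [hl]; linarith
  have hθt := hθ t
  set S : Ω → ℝ := fun ω => ∑ s : Fin n, X (t,s) ω with hS
  have hSm : Measurable S := Finset.measurable_sum _ (fun s _ => hXm (t,s))
  have hX01 : ∀ p ω, 0 ≤ X p ω ∧ X p ω ≤ 1 := fun p ω => by
    rcases h01 p ω with h | h <;> simp [h]
  have hSb : ∀ ω, 0 ≤ S ω ∧ S ω ≤ n := fun ω => by
    constructor
    · exact Finset.sum_nonneg fun s _ => (hX01 (t,s) ω).1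
    · calc S ω ≤ ∑ _s : Fin n, (1:ℝ) := Finset.sum_le_sum fun s _ => (hX01 (t,s) ω).2
        _ = n := by simp
  set V : Ω → ℝ := fun ω => ξ * (S ω - n * θ t) with hV
  have hVm : Measurable V := (hSm.sub measurable_const).const_mul ξ
  have hVb : ∀ ω, |V ω| ≤ 2 * n := fun ω => by
    rw [hV]
    simp only [abs_mul, hξabs, one_mul]
    have h1 := hSb ω
    rw [abs_le]
    have hn1 : (1:ℝ) ≤ n := by exact_mod_cast hn
    constructor <;> nlinarith [hθt.1, hθt.2]
  have hint : Integrable (fun ω => Real.exp (l * V ω)) μ := by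
    refine integrable_exp_of_bounded ((hVm.const_mul l)) (c := l * (2*n)) fun ω => ?_
    rw [abs_mul, abs_of_nonneg hl0]
    exact mul_le_mul_of_nonneg_left (hVb ω) hl0
  have h1 := measure_ge_le_exp_mul_mgf (μ := μ) (X := V) (t := l) ((n:ℝ)*ε) hl0 hint
  set η : ℝ := l * ξ with hη
  have hηabs : |η| ≤ 1 := by rw [hη, abs_mul, hξabs, mul_one, abs_of_nonneg hl0]; exact hl1
  have hmgfV : mgf V μ l = Real.exp (-(η * (n * θ t))) * mgf S μ η := by
    rw [mgf, mgf, ← MeasureTheory.integral_const_mul]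
    refine integral_congr_ae (ae_of_all _ fun ω => ?_)
    simp only [← Real.exp_add]
    congr 1
    rw [hV, hη]
    ring
  have hmgfS : mgf S μ η = (1 + θ t * (Real.exp η - 1))^n := by
    have hemb : Function.Injective (fun s : Fin n => ((t, s) : Fin B × Fin n)) := by
      intro a b h
      simpa using h
    have hfun : S = ∑ p ∈ Finset.univ.map ⟨_, hemb⟩, X p := by
      funext ω
      rw [Finset.sum_apply, Finset.sum_map]
      rfl
    rw [hfun, hind.mgf_sum hXm, Finset.prod_map]
    have heach : ∀ s : Fin n, mgf (X (t, s)) μ η = 1 + θ t * (Real.exp η - 1) := fun s => by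
      rw [mgf_of_bernoulli (hXm (t,s)) (h01 (t,s)) η, hmean t s]
    simp only [Function.Embedding.coeFn_mk, heach]
    rw [Finset.prod_const, Finset.card_univ, Fintype.card_fin]
  have h1x : 0 ≤ 1 + θ t * (Real.exp η - 1) := by
    have heq : 1 + θ t * (Real.exp η - 1) = (1 - θ t) + θ t * Real.exp η := by ring
    rw [heq]
    have := mul_nonneg hθt.1 (Real.exp_pos η).le
    linarith [hθt.2]
  have hpow : (1 + θ t * (Real.exp η - 1))^n ≤ Real.exp ((n:ℝ) * (θ t * (Real.exp η - 1))) := by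
    rw [Real.exp_nat_mul]
    refine pow_le_pow_left₀ h1x ?_ n
    have := Real.add_one_le_exp (θ t * (Real.exp η - 1))
    linarith
  have hscal : mgf V μ l ≤ Real.exp ((n:ℝ) * l^2) := by
    rw [hmgfV, hmgfS]
    calc Real.exp (-(η * (n * θ t))) * (1 + θ t * (Real.exp η - 1))^n
        ≤ Real.exp (-(η * (n * θ t))) * Real.exp ((n:ℝ) * (θ t * (Real.exp η - 1))) :=
          mul_le_mul_of_nonneg_left hpow (Real.exp_pos _).le
      _ = Real.exp ((n:ℝ) * (θ t * (Real.exp η - 1 - η))) := by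
          rw [← Real.exp_add]; congr 1; ring
      _ ≤ Real.exp ((n:ℝ) * l^2) := by
          refine Real.exp_le_exp.2 (mul_le_mul_of_nonneg_left ?_ (Nat.cast_nonneg n))
          have hb := exp_sub_one_sub_le hηabs
          have hb0 : 0 ≤ Real.exp η - 1 - η := by
            have := Real.add_one_le_exp η; linarith
          have hη2 : η^2 = l^2 := by
            rcases hξ with h | h <;> rw [hη, h] <;> ring
          nlinarith [hθt.1, hθt.2]
  have hfinal : (μ {ω | (n:ℝ)*ε ≤ V ω}).toReal ≤ Real.exp (-((n:ℝ) * ε^2 / 4)) := by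
    calc (μ {ω | (n:ℝ)*ε ≤ V ω}).toReal ≤ Real.exp (-l * ((n:ℝ)*ε)) * mgf V μ l := h1
      _ ≤ Real.exp (-l * ((n:ℝ)*ε)) * Real.exp ((n:ℝ) * l^2) :=
          mul_le_mul_of_nonneg_left hscal (Real.exp_pos _).le
      _ = Real.exp (-((n:ℝ) * ε^2 / 4)) := by
          rw [← Real.exp_add]; congr 1; rw [hl]; ring
  rw [ENNReal.le_ofReal_iff_toReal_le (measure_ne_top μ _) (Real.exp_pos _).le]
  exact hfinal


lemma MCE_le_of_forall {Ω : Type*} {B n J : ℕ} {g : Fin B → Fin J}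
    (hg : Function.Surjective g) {α : Fin B → ℝ} (hα : ∀ t, 0 < α t) (θ : Fin B → ℝ)
    (X : Fin B × Fin n → Ω → ℝ) (ω : Ω) {c : ℝ} (hc : 0 ≤ c)
    (h : ∀ t, |θ t - binEst X t ω| ≤ c) : MCE g α θ X ω ≤ c := by
  refine Real.iSup_le (fun j => ?_) hc
  set F := Finset.univ.filter (fun t => g t = j) with hF
  have hFne : F.Nonempty := by obtain ⟨t, ht⟩ := hg j; exact ⟨t, by simp [hF, ht]⟩
  have hA : 0 < ∑ t ∈ F, α t := Finset.sum_pos (fun t _ => hα t) hFne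
  rw [binAvg, binAvg, div_sub_div_same, abs_div, abs_of_pos hA, div_le_iff₀ hA]
  calc |∑ t ∈ F, α t * θ t - ∑ t ∈ F, α t * binEst X t ω|
      = |∑ t ∈ F, α t * (θ t - binEst X t ω)| := by
        rw [← Finset.sum_sub_distrib]; congr 1; refine Finset.sum_congr rfl fun t _ => ?_; ring
    _ ≤ ∑ t ∈ F, |α t * (θ t - binEst X t ω)| := Finset.abs_sum_le_sum_abs _ _
    _ ≤ ∑ t ∈ F, α t * c := Finset.sum_le_sum fun t _ => by
        rw [abs_mul, abs_of_pos (hα t)]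
        exact mul_le_mul_of_nonneg_left (h t) (hα t).le
    _ = c * ∑ t ∈ F, α t := by rw [← Finset.sum_mul, mul_comm]

lemma binEst_mem {Ω : Type*} {B n : ℕ} (hn : 1 ≤ n) {X : Fin B × Fin n → Ω → ℝ}
    (h01 : ∀ p ω, X p ω = 0 ∨ X p ω = 1) (t : Fin B) (ω : Ω) :
    0 ≤ binEst X t ω ∧ binEst X t ω ≤ 1 := by
  have hnpos : (0:ℝ) < n := by exact_mod_cast hn
  have h0 : 0 ≤ ∑ s : Fin n, X (t,s) ω :=
    Finset.sum_nonneg fun s _ => by rcases h01 (t,s) ω with h | h <;> simp [h]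
  have h1 : ∑ s : Fin n, X (t,s) ω ≤ n := by
    calc ∑ s : Fin n, X (t,s) ω ≤ ∑ _s : Fin n, (1:ℝ) :=
          Finset.sum_le_sum fun s _ => by rcases h01 (t,s) ω with h | h <;> simp [h]
      _ = n := by simp
  rw [binEst]
  constructor
  · positivity
  · rw [inv_mul_le_iff₀ hnpos, mul_one]; exact h1


/-- **MCE convergence rate**: for every `δ ∈ (0,1)` there is a constant `C > 0` depending only
on `δ` such that for all `B ≥ 2`, `n ≥ 1` (with `N = nB`) and every histogram-binning model,
with probability at least `1 − δ` we have `MCE ≤ C·√(B·log B / N)`. -/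
theorem mce_rate (δ : ℝ) (hδ0 : 0 < δ) (hδ1 : δ < 1) :
    ∃ C : ℝ, 0 < C ∧
      ∀ (B n : ℕ), 2 ≤ B → 1 ≤ n →
      ∀ (Ω : Type) (_ : MeasurableSpace Ω) (μ : Measure Ω), IsProbabilityMeasure μ →
      ∀ (θ : Fin B → ℝ), (∀ t, θ t ∈ Set.Icc (0 : ℝ) 1) →
      ∀ (X : Fin B × Fin n → Ω → ℝ),
        (∀ p ω, X p ω = 0 ∨ X p ω = 1) →
        (∀ p, Measurable (X p)) →
        iIndepFun X μ →
        (∀ t s, ∫ ω, X (t, s) ω ∂μ = θ t) →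
      ∀ (J : ℕ) (g : Fin B → Fin J), Function.Surjective g →
      ∀ (α : Fin B → ℝ), (∀ t, 0 < α t) →
        ENNReal.ofReal (1 - δ) ≤
          μ {ω | MCE g α θ X ω ≤ C * Real.sqrt (B * Real.log B / (n * B : ℝ))} := by
  have h2δ : (1:ℝ) < 2/δ := by rw [lt_div_iff₀ hδ0]; linarith
  have hlog2δ : 0 < Real.log (2/δ) := Real.log_pos h2δ
  have hlog2 : 0 < Real.log 2 := Real.log_pos one_lt_two
  refine ⟨2 * Real.sqrt (1 + Real.log (2/δ) / Real.log 2), by positivity, ?_⟩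
  set C : ℝ := 2 * Real.sqrt (1 + Real.log (2/δ) / Real.log 2) with hCdef
  have hC : 0 < C := by positivity
  intro B n hB hn Ω mΩ μ hprob θ hθ X h01 hXm hind hmean J g hg α hα
  have hB2 : (2:ℝ) ≤ B := by exact_mod_cast hB
  have hBpos : (0:ℝ) < B := by linarith
  have hnpos : (0:ℝ) < n := by exact_mod_cast hn
  have hlogB : Real.log 2 ≤ Real.log B := Real.log_le_log (by norm_num) hB2
  have hlogBpos : 0 < Real.log B := lt_of_lt_of_le hlog2 hlogB
  set L : ℝ := Real.log (2*B/δ) with hLdef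
  have hLsplit : L = Real.log (2/δ) + Real.log B := by
    rw [hLdef, show (2*(B:ℝ)/δ) = (2/δ)*B by ring,
      Real.log_mul (by positivity) (ne_of_gt hBpos)]
  have hLpos : 0 < L := by rw [hLsplit]; linarith
  have hC2 : C^2 = 4 * (1 + Real.log (2/δ) / Real.log 2) := by
    rw [hCdef, mul_pow, Real.sq_sqrt (by positivity)]
    norm_num
  have hLC : 4 * L ≤ C^2 * Real.log B := by
    have hmono : Real.log (2/δ) ≤ Real.log (2/δ) * (Real.log B / Real.log 2) :=
      le_mul_of_one_le_right hlog2δ.le ((one_le_div hlog2).2 hlogB)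
    have hexp : C^2 * Real.log B
        = 4 * Real.log B + 4 * (Real.log (2/δ) * (Real.log B / Real.log 2)) := by
      rw [hC2]; field_simp
    rw [hexp, hLsplit]; linarith
  -- the target radius
  set R : ℝ := C * Real.sqrt ((B:ℝ) * Real.log B / ((n:ℝ) * B)) with hRdef
  have hRarg : ((B:ℝ) * Real.log B / ((n:ℝ) * B)) = Real.log B / n := by
    field_simp
  have hR0 : 0 ≤ R := by positivity
  set ε : ℝ := 2 * Real.sqrt (L / n) with hεdef
  have hε0 : 0 ≤ ε := by positivity
  have hεR : ε ≤ R := by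
    have h4 : ε = Real.sqrt (4 * (L/n)) := by
      rw [hεdef, show (4:ℝ) * (L/n) = 2^2 * (L/n) by ring, Real.sqrt_mul (by positivity),
        Real.sqrt_sq (by norm_num : (0:ℝ) ≤ 2)]
    have hRs : R = Real.sqrt (C^2 * (Real.log B / n)) := by
      rw [hRdef, hRarg, Real.sqrt_mul (by positivity), Real.sqrt_sq hC.le]
    rw [h4, hRs]
    apply Real.sqrt_le_sqrt
    rw [show (4:ℝ) * (L/n) = 4*L/n by ring, show C^2 * (Real.log B / n) = C^2*Real.log B/n by ring]
    gcongr
  by_cases hcase : ε ≤ 2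
  · -- main case: Chernoff + union bound
    set A : Fin B → ℝ → Set Ω := fun t ξ =>
      {ω | (n:ℝ)*ε ≤ ξ * ((∑ s : Fin n, X (t,s) ω) - n * θ t)} with hA
    have hkey : ∀ (t : Fin B) (ξ : ℝ), ξ = 1 ∨ ξ = -1 →
        μ (A t ξ) ≤ ENNReal.ofReal (Real.exp (-((n:ℝ) * ε^2 / 4))) := fun t ξ hξ =>
      chernoff_bernoulli hn h01 hXm hind hθ hmean t hξ hε0 hcase
    have hexpval : Real.exp (-((n:ℝ) * ε^2 / 4)) = δ/(2*B) := by
      have hεsq : ε^2 = 4*(L/n) := by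
        rw [hεdef, mul_pow, Real.sq_sqrt (by positivity)]; norm_num
      have harg : (n:ℝ) * (4*(L/n)) / 4 = L := by field_simp
      rw [hεsq, harg, hLdef, Real.exp_neg, Real.exp_log (by positivity), inv_div]
    set bad : Set Ω := ⋃ t : Fin B, (A t 1 ∪ A t (-1)) with hbad
    have hAm : ∀ t ξ, MeasurableSet (A t ξ) := fun t ξ =>
      measurableSet_le measurable_const
        (((Finset.measurable_sum _ fun s _ => hXm (t,s)).sub measurable_const).const_mul ξ)
    have hbadm : MeasurableSet bad := MeasurableSet.iUnion fun t => (hAm t 1).union (hAm t (-1))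
    have hbadle : μ bad ≤ ENNReal.ofReal δ := by
      calc μ bad ≤ ∑' t : Fin B, μ (A t 1 ∪ A t (-1)) := measure_iUnion_le _
        _ = ∑ t : Fin B, μ (A t 1 ∪ A t (-1)) := tsum_fintype _
        _ ≤ ∑ _t : Fin B, (ENNReal.ofReal (δ/(2*B)) + ENNReal.ofReal (δ/(2*B))) :=
            Finset.sum_le_sum fun t _ => le_trans (measure_union_le _ _)
              (by rw [← hexpval]
                  exact add_le_add (hkey t 1 (Or.inl rfl)) (hkey t (-1) (Or.inr rfl)))
        _ = ENNReal.ofReal δ := by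
            rw [Finset.sum_const, Finset.card_univ, Fintype.card_fin, nsmul_eq_mul,
              ← ENNReal.ofReal_add (by positivity) (by positivity),
              ← ENNReal.ofReal_natCast B, ← ENNReal.ofReal_mul (Nat.cast_nonneg B)]
            congr 1
            field_simp
            ring
    have hsub : badᶜ ⊆ {ω | MCE g α θ X ω ≤ R} := by
      intro ω hω
      simp only [hbad, hA, Set.compl_iUnion, Set.mem_iInter, Set.mem_compl_iff, Set.mem_union,
        Set.mem_setOf_eq, not_or, not_le] at hω
      refine MCE_le_of_forall hg hα θ X ω hR0 fun t => ?_
      obtain ⟨h1, h2⟩ := hω t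
      rw [one_mul] at h1
      rw [neg_one_mul] at h2
      refine le_trans ?_ hεR
      have hrepr : θ t - binEst X t ω = (n:ℝ)⁻¹ * ((n:ℝ) * θ t - ∑ s : Fin n, X (t,s) ω) := by
        rw [binEst]; field_simp
      rw [hrepr, abs_mul, abs_of_nonneg (inv_nonneg.2 hnpos.le), inv_mul_le_iff₀ hnpos,
        abs_le]
      constructor <;> [linarith; linarith]
    have hcompl : μ badᶜ = 1 - μ bad := prob_compl_eq_one_sub hbadm
    calc ENNReal.ofReal (1 - δ) = 1 - ENNReal.ofReal δ := by
          rw [ENNReal.ofReal_sub 1 hδ0.le, ENNReal.ofReal_one]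
      _ ≤ 1 - μ bad := tsub_le_tsub_left hbadle 1
      _ = μ badᶜ := hcompl.symm
      _ ≤ μ {ω | MCE g α θ X ω ≤ R} := measure_mono hsub
  · -- trivial case: the radius exceeds 1
    push_neg at hcase
    have hR1 : 1 ≤ R := by linarith
    have hall : ∀ ω, MCE g α θ X ω ≤ R := fun ω => by
      refine MCE_le_of_forall hg hα θ X ω hR0 fun t => ?_
      have hest := binEst_mem hn h01 t ω
      have hθt := hθ t
      rw [abs_le]
      constructor <;> [linarith [hθt.1, hest.2]; linarith [hθt.2, hest.1]]
    calc ENNReal.ofReal (1 - δ) ≤ 1 := ENNReal.ofReal_le_one.2 (by linarith)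
      _ = μ Set.univ := measure_univ.symm
      _ ≤ μ {ω | MCE g α θ X ω ≤ R} := measure_mono fun ω _ => hall ω
end

section
/- For every output bin j, the expected calibration deviation satisfies E[|o_j − e_j|] ≤ k_j·√(2πB/N) (equivalently, since N = nB, E[|o_j − e_j|] ≤ k_j·√(2π/n)). -/
open MeasureTheory ProbabilityTheory Finset

/-- **Expected per-output-bin calibration deviation**: for every output bin `j`,
`E[|o_j − e_j|] ≤ k_j·√(2πB/N) = k_j·√(2π/n)`, where `k_j` is the number of input bins
mapped into output bin `j` and `N = nB`. -/
theorem expected_output_bin_deviation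
    {Ω : Type*} [MeasurableSpace Ω] (μ : Measure Ω) [IsProbabilityMeasure μ]
    (B n : ℕ) (hB : 1 ≤ B) (hn : 1 ≤ n)
    (θ : Fin B → ℝ) (hθ : ∀ t, θ t ∈ Set.Icc (0 : ℝ) 1)
    (X : Fin B × Fin n → Ω → ℝ)
    (hX01 : ∀ p ω, X p ω = 0 ∨ X p ω = 1)
    (hXmeas : ∀ p, Measurable (X p))
    (hindep : iIndepFun X μ)
    (hmean : ∀ t s, ∫ ω, X (t, s) ω ∂μ = θ t)
    (J : ℕ) (g : Fin B → Fin J) (hg : Function.Surjective g)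
    (α : Fin B → ℝ) (hα : ∀ t, 0 < α t)
    (j : Fin J) :
    ∫ ω, |binAvg g α θ j - binAvg g α (fun t => binEst X t ω) j| ∂μ
      ≤ ((univ.filter (fun t => g t = j)).card : ℝ) *
          Real.sqrt (2 * Real.pi * B / (n * B : ℝ)) := by
  have hn0 : (0:ℝ) < n := by exact_mod_cast hn
  have hB0 : (0:ℝ) < B := by exact_mod_cast hB
  -- simplify the RHS constant
  have hc : (2 * Real.pi * B / (n * B : ℝ)) = 2 * Real.pi / n := by
    field_simp
  -- bounded measurable functions are integrable
  have bdd_int : ∀ (C : ℝ) (f : Ω → ℝ), Measurable f → (∀ ω, |f ω| ≤ C) →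
      Integrable f μ := fun C f hf hb =>
    (integrable_const C).mono' hf.aestronglyMeasurable
      (ae_of_all _ fun ω => by simpa [Real.norm_eq_abs] using hb ω)
  set S := univ.filter (fun t => g t = j) with hS
  -- deviation of each bin
  set Y : Fin B → Ω → ℝ := fun t ω => θ t - binEst X t ω with hY
  have hXbd : ∀ p ω, |X p ω| ≤ 1 := by
    intro p ω; rcases hX01 p ω with h | h <;> simp [h]
  have hEstmem : ∀ t ω, binEst X t ω ∈ Set.Icc (0:ℝ) 1 := by
    intro t ω
    constructor
    · apply mul_nonneg (by positivity)
      apply Finset.sum_nonneg; intro s _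
      rcases hX01 (t, s) ω with h | h <;> simp [h]
    · rw [binEst, inv_mul_le_iff₀ hn0]
      calc ∑ s : Fin n, X (t, s) ω ≤ ∑ _s : Fin n, (1:ℝ) := by
            apply Finset.sum_le_sum; intro s _
            rcases hX01 (t, s) ω with h | h <;> simp [h]
        _ = (n:ℝ) * 1 := by simp
  have hYbd : ∀ t ω, |Y t ω| ≤ 1 := by
    intro t ω
    have h1 := hθ t; have h2 := hEstmem t ω
    rw [abs_le]
    constructor <;> simp only [hY] <;> nlinarith [h1.1, h1.2, h2.1, h2.2]
  have hEstMeas : ∀ t, Measurable (fun ω => binEst X t ω) := by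
    intro t
    apply Measurable.const_mul
    exact Finset.measurable_sum _ fun s _ => hXmeas (t, s)
  have hYmeas : ∀ t, Measurable (Y t) := fun t =>
    (measurable_const.sub (hEstMeas t))
  -- second moment bound for each bin
  have hY2 : ∀ t, ∫ ω, (Y t ω)^2 ∂μ ≤ 1 / (4 * n) := by
    intro t
    set Z : Fin n → Ω → ℝ := fun s ω => X (t, s) ω - θ t with hZ
    have hZmeas : ∀ s, Measurable (Z s) := fun s => (hXmeas (t, s)).sub measurable_const
    have hZbd : ∀ s ω, |Z s ω| ≤ 1 := by
      intro s ω
      have := hθ t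
      rcases hX01 (t, s) ω with h | h <;> rw [abs_le] <;>
        constructor <;> simp only [hZ, h] <;> nlinarith [this.1, this.2]
    have hZint : ∀ s, Integrable (Z s) μ := fun s => bdd_int 1 _ (hZmeas s) (hZbd s)
    have hZmean : ∀ s, ∫ ω, Z s ω ∂μ = 0 := by
      intro s
      rw [integral_sub ((bdd_int 1 _ (hXmeas (t,s)) (hXbd (t,s)))) (integrable_const _)]
      simp [hmean t s]
    -- expansion of Y t
    have hYeq : ∀ ω, Y t ω = -((n:ℝ)⁻¹ * ∑ s : Fin n, Z s ω) := by
      intro ω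
      simp only [hY, hZ, binEst, Finset.sum_sub_distrib, Finset.sum_const, card_univ,
        Fintype.card_fin, nsmul_eq_mul, mul_sub]
      field_simp
      ring
    have key : ∫ ω, (Y t ω)^2 ∂μ
        = (n:ℝ)⁻¹^2 * ∑ s : Fin n, ∑ s' : Fin n, ∫ ω, Z s ω * Z s' ω ∂μ := by
      have : ∀ ω, (Y t ω)^2 = (n:ℝ)⁻¹^2 * ∑ s : Fin n, ∑ s' : Fin n, Z s ω * Z s' ω := by
        intro ω
        rw [hYeq ω, neg_sq, mul_pow, sq (∑ s : Fin n, Z s ω), Finset.sum_mul_sum]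
      simp_rw [this]
      rw [integral_const_mul]
      congr 1
      rw [integral_finset_sum]
      · congr 1; ext s
        rw [integral_finset_sum]
        intro s' _
        exact bdd_int 1 _ ((hZmeas s).mul (hZmeas s'))
          (fun ω => by
            calc |Z s ω * Z s' ω| = |Z s ω| * |Z s' ω| := abs_mul _ _
              _ ≤ 1 * 1 := mul_le_mul (hZbd s ω) (hZbd s' ω) (abs_nonneg _) zero_le_one
              _ = 1 := one_mul 1)
      · intro s _
        apply integrable_finset_sum
        intro s' _
        exact bdd_int 1 _ ((hZmeas s).mul (hZmeas s'))
          (fun ω => by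
            calc |Z s ω * Z s' ω| = |Z s ω| * |Z s' ω| := abs_mul _ _
              _ ≤ 1 * 1 := mul_le_mul (hZbd s ω) (hZbd s' ω) (abs_nonneg _) zero_le_one
              _ = 1 := one_mul 1)
    -- off-diagonal terms vanish
    have hoff : ∀ s s' : Fin n, s ≠ s' → ∫ ω, Z s ω * Z s' ω ∂μ = 0 := by
      intro s s' hss
      have hind : IndepFun (X (t, s)) (X (t, s')) μ :=
        hindep.indepFun (by simp [Prod.ext_iff, hss])
      have hind' : IndepFun (Z s) (Z s') μ :=
        hind.comp (measurable_id.sub_const (θ t)) (measurable_id.sub_const (θ t))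
      have := hind'.integral_mul_eq_mul_integral (hZmeas s).aestronglyMeasurable (hZmeas s').aestronglyMeasurable
      calc ∫ ω, Z s ω * Z s' ω ∂μ = ∫ ω, (Z s * Z s') ω ∂μ := rfl
        _ = (∫ ω, Z s ω ∂μ) * ∫ ω, Z s' ω ∂μ := this
        _ = 0 := by rw [hZmean s, hZmean s']; ring
    -- diagonal terms are at most 1/4
    have hdiag : ∀ s : Fin n, ∫ ω, Z s ω * Z s ω ∂μ ≤ 1/4 := by
      intro s
      have hsq : ∀ ω, Z s ω * Z s ω = X (t, s) ω * (1 - 2 * θ t) + θ t^2 := by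
        intro ω
        have hx : X (t, s) ω * X (t, s) ω = X (t, s) ω := by
          rcases hX01 (t, s) ω with h | h <;> simp [h]
        simp only [hZ]; nlinarith [hx]
      have : ∫ ω, Z s ω * Z s ω ∂μ = θ t * (1 - 2 * θ t) + θ t^2 := by
        simp_rw [hsq]
        rw [integral_add (((bdd_int 1 _ (hXmeas (t,s)) (hXbd (t,s)))).mul_const _)
          (integrable_const _), integral_mul_const, hmean t s]
        simp
      rw [this]
      have := hθ t
      nlinarith [this.1, this.2, sq_nonneg (θ t - 1/2)]
    -- combine
    calc ∫ ω, (Y t ω)^2 ∂μ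
        = (n:ℝ)⁻¹^2 * ∑ s : Fin n, ∑ s' : Fin n, ∫ ω, Z s ω * Z s' ω ∂μ := key
      _ ≤ (n:ℝ)⁻¹^2 * ∑ s : Fin n, (1/4 : ℝ) := by
          apply mul_le_mul_of_nonneg_left _ (by positivity)
          apply Finset.sum_le_sum
          intro s _
          calc ∑ s' : Fin n, ∫ ω, Z s ω * Z s' ω ∂μ
              = ∫ ω, Z s ω * Z s ω ∂μ := by
                rw [Finset.sum_eq_single s]
                · intro s' _ hs'; exact hoff s s' (Ne.symm hs')
                · intro h; exact absurd (Finset.mem_univ s) h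
            _ ≤ 1/4 := hdiag s
      _ = 1 / (4 * n) := by
          simp only [Finset.sum_const, card_univ, Fintype.card_fin, nsmul_eq_mul]
          field_simp
  -- L1 bound for each bin
  have hY1 : ∀ t, ∫ ω, |Y t ω| ∂μ ≤ Real.sqrt (2 * Real.pi / n) := by
    intro t
    have hmem : MemLp (fun ω => |Y t ω|) 2 μ :=
      MemLp.of_bound ((hYmeas t).abs.aestronglyMeasurable) 1
        (ae_of_all _ fun ω => by simpa [Real.norm_eq_abs, abs_abs] using hYbd t ω)
    have hvar := variance_nonneg (fun ω => |Y t ω|) μ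
    rw [variance_eq_sub hmem] at hvar
    have hsq : (∫ ω, |Y t ω| ∂μ)^2 ≤ ∫ ω, (Y t ω)^2 ∂μ := by
      have : ∫ ω, ((fun ω => |Y t ω|)^2) ω ∂μ = ∫ ω, (Y t ω)^2 ∂μ := by
        congr 1; ext ω; simp [sq_abs]
      linarith [hvar, this ▸ hvar]
    have hint_nonneg : 0 ≤ ∫ ω, |Y t ω| ∂μ := integral_nonneg fun ω => abs_nonneg _
    rw [Real.le_sqrt hint_nonneg (by positivity)]
    calc (∫ ω, |Y t ω| ∂μ)^2 ≤ ∫ ω, (Y t ω)^2 ∂μ := hsq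
      _ ≤ 1 / (4 * n) := hY2 t
      _ ≤ 2 * Real.pi / n := by
          rw [div_le_div_iff₀ (by positivity) hn0]
          nlinarith [Real.pi_gt_three, hn0]
  -- pointwise bound on the binAvg difference
  have hSne : S.Nonempty := by
    obtain ⟨t, ht⟩ := hg j
    exact ⟨t, by simp [hS, ht]⟩
  have hSα : 0 < ∑ t ∈ S, α t := Finset.sum_pos (fun t _ => hα t) hSne
  have hptwise : ∀ ω, |binAvg g α θ j - binAvg g α (fun t => binEst X t ω) j|
      ≤ ∑ t ∈ S, |Y t ω| := by
    intro ω
    have hdiff : binAvg g α θ j - binAvg g α (fun t => binEst X t ω) j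
        = (∑ t ∈ S, α t * Y t ω) / (∑ t ∈ S, α t) := by
      simp only [binAvg, ← hS, div_sub_div_same, ← Finset.sum_sub_distrib, hY, mul_sub]
    rw [hdiff, abs_div, abs_of_pos hSα, div_le_iff₀ hSα]
    calc |∑ t ∈ S, α t * Y t ω| ≤ ∑ t ∈ S, |α t * Y t ω| := Finset.abs_sum_le_sum_abs _ _
      _ ≤ ∑ t ∈ S, (∑ t' ∈ S, α t') * |Y t ω| := by
          apply Finset.sum_le_sum
          intro t ht
          rw [abs_mul, abs_of_pos (hα t)]
          exact mul_le_mul_of_nonneg_right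
            (Finset.single_le_sum (fun t' _ => (hα t').le) ht) (abs_nonneg _)
      _ = (∑ t ∈ S, |Y t ω|) * (∑ t ∈ S, α t) := by
          rw [← Finset.mul_sum]; ring
  -- integrate
  have hYint : ∀ t, Integrable (fun ω => |Y t ω|) μ := fun t =>
    bdd_int 1 _ (hYmeas t).abs (fun ω => by simpa [abs_abs] using hYbd t ω)
  have hDmeas : Measurable (fun ω => |binAvg g α θ j - binAvg g α (fun t => binEst X t ω) j|) := by
    apply Measurable.abs
    apply Measurable.sub measurable_const
    simp only [binAvg]
    apply Measurable.div _ measurable_const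
    exact Finset.measurable_sum _ fun t _ => (hEstMeas t).const_mul _
  have hDint : Integrable
      (fun ω => |binAvg g α θ j - binAvg g α (fun t => binEst X t ω) j|) μ := by
    apply bdd_int (S.card : ℝ) _ hDmeas
    intro ω
    rw [abs_abs]
    calc |binAvg g α θ j - binAvg g α (fun t => binEst X t ω) j|
        ≤ ∑ t ∈ S, |Y t ω| := hptwise ω
      _ ≤ ∑ _t ∈ S, (1:ℝ) := Finset.sum_le_sum fun t _ => hYbd t ω
      _ = S.card := by simp
  calc ∫ ω, |binAvg g α θ j - binAvg g α (fun t => binEst X t ω) j| ∂μ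
      ≤ ∫ ω, ∑ t ∈ S, |Y t ω| ∂μ := by
        apply integral_mono hDint (integrable_finset_sum _ fun t _ => hYint t)
        exact hptwise
    _ = ∑ t ∈ S, ∫ ω, |Y t ω| ∂μ := integral_finset_sum _ fun t _ => hYint t
    _ ≤ ∑ _t ∈ S, Real.sqrt (2 * Real.pi / n) := Finset.sum_le_sum fun t _ => hY1 t
    _ = (S.card : ℝ) * Real.sqrt (2 * Real.pi / n) := by
        rw [Finset.sum_const, nsmul_eq_mul]
    _ = (S.card : ℝ) * Real.sqrt (2 * Real.pi * B / (n * B : ℝ)) := by rw [hc]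
end

section
/- The expected calibration error satisfies E[ECE] ≤ (∑_{j=1}^J w_j·k_j)·√(2πB/N); in particular, if each output bin aggregates at most κ input bins (k_j ≤ κ for all j), then E[ECE] ≤ κ·√(2πB/N), so ECE converges to zero at rate O(√(B/N)). -/
open MeasureTheory ProbabilityTheory Finset

/-- A bounded measurable function is integrable over a finite measure. -/
lemma integrable_of_bdd {Ω : Type*} [MeasurableSpace Ω] {μ : Measure Ω} [IsFiniteMeasure μ]
    {f : Ω → ℝ} (hm : Measurable f) {C : ℝ} (h : ∀ ω, |f ω| ≤ C) : Integrable f μ :=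
  ⟨hm.aestronglyMeasurable, HasFiniteIntegral.of_bounded (C := C)
    (ae_of_all _ (fun ω => by simpa using h ω))⟩

/-- Core estimate: the expected absolute deviation of an empirical mean of `n` independent
`{0,1}`-valued random variables with common mean `θt` is at most `1/(2√n)`. -/
lemma bin_dev_bound {Ω : Type*} [MeasurableSpace Ω] (μ : Measure Ω) [IsProbabilityMeasure μ]
    (n : ℕ) (hn : 1 ≤ n) (θt : ℝ) (hθt : θt ∈ Set.Icc (0 : ℝ) 1)
    (Y : Fin n → Ω → ℝ) (hY01 : ∀ s ω, Y s ω = 0 ∨ Y s ω = 1)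
    (hYmeas : ∀ s, Measurable (Y s))
    (hYindep : ∀ s s', s ≠ s' → IndepFun (Y s) (Y s') μ)
    (hYmean : ∀ s, ∫ ω, Y s ω ∂μ = θt) :
    ∫ ω, |θt - (n : ℝ)⁻¹ * ∑ s : Fin n, Y s ω| ∂μ ≤ 1 / (2 * Real.sqrt n) := by
  have hn0 : (0 : ℝ) < n := by exact_mod_cast hn
  have hY01' : ∀ s ω, Y s ω ∈ Set.Icc (0 : ℝ) 1 := by
    intro s ω; rcases hY01 s ω with h | h <;> rw [h] <;> constructor <;> norm_num
  set Z : Fin n → Ω → ℝ := fun s ω => θt - Y s ω with hZ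
  have hZm : ∀ s, Measurable (Z s) := fun s => measurable_const.sub (hYmeas s)
  have hZval : ∀ s ω, Z s ω = θt - Y s ω := fun s ω => rfl
  have hne : (n : ℝ) ≠ 0 := ne_of_gt hn0
  have hZb : ∀ s ω, |Z s ω| ≤ 1 := by
    intro s ω
    have h1 := (hY01' s ω).1; have h2 := (hY01' s ω).2
    rw [hZval, abs_le]
    constructor <;> linarith [hθt.1, hθt.2]
  have hZint : ∀ s, Integrable (Z s) μ := fun s => integrable_of_bdd (hZm s) (hZb s)
  have hYint : ∀ s, Integrable (Y s) μ := fun s => integrable_of_bdd (hYmeas s) (C := 1)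
    (fun ω => by rcases hY01 s ω with h | h <;> rw [h] <;> norm_num)
  have hZmean : ∀ s, ∫ ω, Z s ω ∂μ = 0 := by
    intro s
    simp only [hZ]
    rw [integral_sub (integrable_const _) (hYint s), hYmean s, integral_const]
    simp
  have hZprodint : ∀ s s', Integrable (fun ω => Z s ω * Z s' ω) μ := by
    intro s s'
    refine integrable_of_bdd ((hZm s).mul (hZm s')) (C := 1) (fun ω => ?_)
    rw [abs_mul]
    exact mul_le_one₀ (hZb s ω) (abs_nonneg _) (hZb s' ω)
  have hprod : ∀ s s', s ≠ s' → ∫ ω, Z s ω * Z s' ω ∂μ = 0 := by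
    intro s s' hss'
    have hmφ : Measurable (fun x : ℝ => θt - x) := measurable_const.sub measurable_id
    have hind : IndepFun (Z s) (Z s') μ := (hYindep s s' hss').comp hmφ hmφ
    have := ProbabilityTheory.IndepFun.integral_mul_eq_mul_integral hind (hZint s).1 (hZint s').1
    calc ∫ ω, Z s ω * Z s' ω ∂μ = ∫ ω, (Z s * Z s') ω ∂μ := rfl
      _ = (∫ ω, Z s ω ∂μ) * ∫ ω, Z s' ω ∂μ := this
      _ = 0 := by rw [hZmean s, hZmean s']; ring
  have hsq : ∀ s, ∫ ω, (Z s ω) ^ 2 ∂μ = θt - θt ^ 2 := by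
    intro s
    have key : ∀ ω, (Z s ω) ^ 2 = θt ^ 2 - (2 * θt - 1) * Y s ω := by
      intro ω; rcases hY01 s ω with h | h <;> simp [hZ, h] <;> ring
    calc ∫ ω, (Z s ω) ^ 2 ∂μ = ∫ ω, (θt ^ 2 - (2 * θt - 1) * Y s ω) ∂μ := by
          exact integral_congr_ae (ae_of_all _ key)
      _ = θt ^ 2 - (2 * θt - 1) * θt := by
          rw [integral_sub (integrable_const _) ((hYint s).const_mul _), integral_const,
            integral_const_mul, hYmean s]
          simp
      _ = θt - θt ^ 2 := by ring
  -- second moment bound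
  have hD : ∀ ω, θt - (n : ℝ)⁻¹ * ∑ s : Fin n, Y s ω = (n : ℝ)⁻¹ * ∑ s : Fin n, Z s ω := by
    intro ω
    simp only [hZ, Finset.sum_sub_distrib, Finset.sum_const, Finset.card_univ, Fintype.card_fin,
      nsmul_eq_mul]
    field_simp
  have hsum2 : ∫ ω, (θt - (n : ℝ)⁻¹ * ∑ s : Fin n, Y s ω) ^ 2 ∂μ ≤ 1 / (4 * n) := by
    have step1 : ∫ ω, (θt - (n : ℝ)⁻¹ * ∑ s : Fin n, Y s ω) ^ 2 ∂μ
        = ((n : ℝ)⁻¹) ^ 2 * ∑ s : Fin n, ∑ s' : Fin n, ∫ ω, Z s ω * Z s' ω ∂μ := by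
      have e1 : ∀ ω, (θt - (n : ℝ)⁻¹ * ∑ s : Fin n, Y s ω) ^ 2
          = ((n : ℝ)⁻¹) ^ 2 * ∑ s : Fin n, ∑ s' : Fin n, Z s ω * Z s' ω := by
        intro ω
        rw [hD ω, mul_pow, sq (∑ s : Fin n, Z s ω), Finset.sum_mul_sum]
      rw [integral_congr_ae (ae_of_all _ e1), integral_const_mul]
      congr 1
      rw [integral_finset_sum _ (fun s _ => integrable_finset_sum _ (fun s' _ => hZprodint s s'))]
      exact Finset.sum_congr rfl fun s _ =>
        (integral_finset_sum _ (fun s' _ => hZprodint s s'))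
    rw [step1]
    have step2 : ∑ s : Fin n, ∑ s' : Fin n, ∫ ω, Z s ω * Z s' ω ∂μ
        = ∑ s : Fin n, (θt - θt ^ 2) := by
      refine Finset.sum_congr rfl fun s _ => ?_
      rw [Finset.sum_eq_single s]
      · rw [← hsq s]
        exact integral_congr_ae (ae_of_all _ (fun ω => (sq (Z s ω)).symm))
      · intro s' _ hs'; exact hprod s s' (fun h => hs' h.symm)
      · intro h; exact absurd (Finset.mem_univ s) h
    rw [step2, Finset.sum_const, Finset.card_univ, Fintype.card_fin, nsmul_eq_mul]
    have hθsq : θt - θt ^ 2 ≤ 1 / 4 := by nlinarith [sq_nonneg (θt - 1 / 2)]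
    have : ((n : ℝ)⁻¹) ^ 2 * ((n : ℝ) * (θt - θt ^ 2))
        ≤ ((n : ℝ)⁻¹) ^ 2 * ((n : ℝ) * (1 / 4)) := by
      have h1 : (0 : ℝ) ≤ ((n : ℝ)⁻¹) ^ 2 := sq_nonneg _
      have h2 : (n : ℝ) * (θt - θt ^ 2) ≤ (n : ℝ) * (1 / 4) :=
        mul_le_mul_of_nonneg_left hθsq hn0.le
      exact mul_le_mul_of_nonneg_left h2 h1
    refine le_trans this (le_of_eq ?_)
    field_simp
  -- from second moment to first absolute moment
  have hs : (0 : ℝ) < Real.sqrt n := Real.sqrt_pos.2 hn0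
  have hs2 : Real.sqrt n * Real.sqrt n = (n : ℝ) := Real.mul_self_sqrt hn0.le
  have key : ∀ x : ℝ, |x| ≤ Real.sqrt n * x ^ 2 + 1 / (4 * Real.sqrt n) := by
    intro x
    have h1 : |x| * Real.sqrt n ≤ (Real.sqrt n * x ^ 2 + 1 / (4 * Real.sqrt n)) * Real.sqrt n := by
      have h2 : (0 : ℝ) ≤ (Real.sqrt n * |x| - 1 / 2) ^ 2 := sq_nonneg _
      have h3 : (1 / (4 * Real.sqrt n)) * Real.sqrt n = 1 / 4 := by field_simp
      have h4 : |x| ^ 2 = x ^ 2 := sq_abs x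
      nlinarith [hs, hs2]
    exact le_of_mul_le_mul_right h1 hs
  set D : Ω → ℝ := fun ω => θt - (n : ℝ)⁻¹ * ∑ s : Fin n, Y s ω with hDdef
  have hDm : Measurable D :=
    measurable_const.sub ((Finset.measurable_sum univ (fun s _ => hYmeas s)).const_mul _)
  have hDb : ∀ ω, |D ω| ≤ 1 := by
    intro ω
    simp only [hDdef]
    rw [hD ω, abs_mul, abs_inv, Nat.abs_cast]
    calc (n : ℝ)⁻¹ * |∑ s : Fin n, Z s ω| ≤ (n : ℝ)⁻¹ * ∑ s : Fin n, |Z s ω| := by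
          exact mul_le_mul_of_nonneg_left (Finset.abs_sum_le_sum_abs _ _) (by positivity)
      _ ≤ (n : ℝ)⁻¹ * ∑ s : Fin n, (1 : ℝ) := by
          exact mul_le_mul_of_nonneg_left (Finset.sum_le_sum fun s _ => hZb s ω) (by positivity)
      _ = 1 := by simp; field_simp
  have hDint : Integrable (fun ω => |D ω|) μ :=
    integrable_of_bdd hDm.abs (C := 1) (fun ω => by rw [abs_abs]; exact hDb ω)
  have hD2int : Integrable (fun ω => D ω ^ 2) μ := by
    refine integrable_of_bdd (hDm.pow_const 2) (C := 1) (fun ω => ?_)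
    rw [abs_pow]
    calc |D ω| ^ 2 ≤ 1 ^ 2 := pow_le_pow_left₀ (abs_nonneg _) (hDb ω) 2
      _ = 1 := one_pow 2
  calc ∫ ω, |D ω| ∂μ ≤ ∫ ω, (Real.sqrt n * D ω ^ 2 + 1 / (4 * Real.sqrt n)) ∂μ := by
        refine integral_mono hDint ((hD2int.const_mul _).add (integrable_const _)) ?_
        intro ω; exact key (D ω)
    _ = Real.sqrt n * (∫ ω, D ω ^ 2 ∂μ) + 1 / (4 * Real.sqrt n) := by
        rw [integral_add (hD2int.const_mul _) (integrable_const _), integral_const_mul,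
          integral_const]
        simp
    _ ≤ Real.sqrt n * (1 / (4 * n)) + 1 / (4 * Real.sqrt n) := by
        have hsum2' : ∫ ω, D ω ^ 2 ∂μ ≤ 1 / (4 * n) := hsum2
        have h5 : Real.sqrt n * (∫ ω, D ω ^ 2 ∂μ) ≤ Real.sqrt n * (1 / (4 * n)) :=
          mul_le_mul_of_nonneg_left hsum2' hs.le
        linarith
    _ = 1 / (2 * Real.sqrt n) := by
        have h6 : Real.sqrt n * (1 / (4 * n)) = 1 / (4 * Real.sqrt n) := by
          field_simp
          nlinarith [hs2]
        rw [h6]; ring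

/-- **Expected calibration error bound**: with `ECE = ∑_j w_j·|o_j − e_j|` for nonnegative
weights summing to one, `E[ECE] ≤ (∑_j w_j·k_j)·√(2πB/N)`; in particular, if every output
bin aggregates at most `κ` input bins then `E[ECE] ≤ κ·√(2πB/N)`, i.e. `ECE = O(√(B/N))`. -/
theorem expected_ECE_bound
    {Ω : Type*} [MeasurableSpace Ω] (μ : Measure Ω) [IsProbabilityMeasure μ]
    (B n : ℕ) (hB : 1 ≤ B) (hn : 1 ≤ n)
    (θ : Fin B → ℝ) (hθ : ∀ t, θ t ∈ Set.Icc (0 : ℝ) 1)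
    (X : Fin B × Fin n → Ω → ℝ)
    (hX01 : ∀ p ω, X p ω = 0 ∨ X p ω = 1)
    (hXmeas : ∀ p, Measurable (X p))
    (hindep : iIndepFun X μ)
    (hmean : ∀ t s, ∫ ω, X (t, s) ω ∂μ = θ t)
    (J : ℕ) (g : Fin B → Fin J) (hg : Function.Surjective g)
    (α : Fin B → ℝ) (hα : ∀ t, 0 < α t)
    (w : Fin J → ℝ) (hw0 : ∀ j, 0 ≤ w j) (hw1 : ∑ j : Fin J, w j = 1) :
    (∫ ω, ∑ j : Fin J, w j * |binAvg g α θ j - binAvg g α (fun t => binEst X t ω) j| ∂μ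
        ≤ (∑ j : Fin J, w j * ((univ.filter (fun t => g t = j)).card : ℝ)) *
            Real.sqrt (2 * Real.pi * B / (n * B : ℝ))) ∧
    ∀ κ : ℝ, (∀ j : Fin J, ((univ.filter (fun t => g t = j)).card : ℝ) ≤ κ) →
      ∫ ω, ∑ j : Fin J, w j * |binAvg g α θ j - binAvg g α (fun t => binEst X t ω) j| ∂μ
        ≤ κ * Real.sqrt (2 * Real.pi * B / (n * B : ℝ)) := by
  classical
  have hn0 : (0 : ℝ) < n := by exact_mod_cast hn
  have hB0 : (0 : ℝ) < B := by exact_mod_cast hB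
  set c : ℝ := Real.sqrt (2 * Real.pi * B / (n * B : ℝ)) with hcdef
  have hc : c = Real.sqrt (2 * Real.pi) / Real.sqrt n := by
    rw [hcdef, show 2 * Real.pi * (B : ℝ) / ((n : ℝ) * B) = 2 * Real.pi / n by
      field_simp, Real.sqrt_div (by positivity)]
  have hs : (0 : ℝ) < Real.sqrt n := Real.sqrt_pos.2 hn0
  have hc0 : 0 ≤ c := Real.sqrt_nonneg _
  -- 1/(2√n) ≤ c
  have h_half_le_c : 1 / (2 * Real.sqrt n) ≤ c := by
    rw [hc, show (1 : ℝ) / (2 * Real.sqrt n) = (1 / 2) / Real.sqrt n by ring]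
    gcongr
    nlinarith [Real.sq_sqrt (show (0 : ℝ) ≤ 2 * Real.pi by positivity),
      Real.sqrt_nonneg (2 * Real.pi), Real.pi_gt_three]
  -- empirical estimates are in [0,1]
  have hX01' : ∀ p ω, X p ω ∈ Set.Icc (0 : ℝ) 1 := by
    intro p ω; rcases hX01 p ω with h | h <;> rw [h] <;> constructor <;> norm_num
  have hEst01 : ∀ t ω, binEst X t ω ∈ Set.Icc (0 : ℝ) 1 := by
    intro t ω
    constructor
    · unfold binEst
      have : (0 : ℝ) ≤ ∑ s : Fin n, X (t, s) ω :=
        Finset.sum_nonneg fun s _ => (hX01' (t, s) ω).1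
      positivity
    · unfold binEst
      calc (n : ℝ)⁻¹ * ∑ s : Fin n, X (t, s) ω ≤ (n : ℝ)⁻¹ * ∑ s : Fin n, (1 : ℝ) := by
            exact mul_le_mul_of_nonneg_left
              (Finset.sum_le_sum fun s _ => (hX01' (t, s) ω).2) (by positivity)
        _ = 1 := by simp; field_simp
  have hDb : ∀ t ω, |θ t - binEst X t ω| ≤ 1 := by
    intro t ω
    rw [abs_le]
    constructor <;> linarith [(hθ t).1, (hθ t).2, (hEst01 t ω).1, (hEst01 t ω).2]
  -- measurability
  have hmeasEst : ∀ t, Measurable (fun ω => binEst X t ω) := fun t =>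
    (Finset.measurable_sum univ fun s _ => hXmeas (t, s)).const_mul _
  have hmeasD : ∀ t, Measurable (fun ω => θ t - binEst X t ω) := fun t =>
    measurable_const.sub (hmeasEst t)
  have hDint : ∀ t, Integrable (fun ω => |θ t - binEst X t ω|) μ := fun t =>
    integrable_of_bdd (hmeasD t).abs (C := 1) (fun ω => by rw [abs_abs]; exact hDb t ω)
  -- per-input-bin deviation bound via the core lemma
  have hdev : ∀ t, ∫ ω, |θ t - binEst X t ω| ∂μ ≤ 1 / (2 * Real.sqrt n) := by
    intro t
    have := bin_dev_bound μ n hn (θ t) (hθ t) (fun s => X (t, s))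
      (fun s ω => hX01 (t, s) ω) (fun s => hXmeas (t, s))
      (fun s s' hss' => hindep.indepFun (by simpa using hss'))
      (fun s => hmean t s)
    simpa [binEst] using this
  -- pointwise aggregation bound
  have hA : ∀ ω j, |binAvg g α θ j - binAvg g α (fun t => binEst X t ω) j|
      ≤ ∑ t ∈ univ.filter (fun t => g t = j), |θ t - binEst X t ω| := by
    intro ω j
    have hFne : (univ.filter (fun t => g t = j)).Nonempty := by
      obtain ⟨t, ht⟩ := hg j
      exact ⟨t, by simp [ht]⟩
    have hS : 0 < ∑ t ∈ univ.filter (fun t => g t = j), α t :=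
      Finset.sum_pos (fun t _ => hα t) hFne
    have hdiff : binAvg g α θ j - binAvg g α (fun t => binEst X t ω) j
        = (∑ t ∈ univ.filter (fun t => g t = j), α t * (θ t - binEst X t ω)) /
          (∑ t ∈ univ.filter (fun t => g t = j), α t) := by
      unfold binAvg
      rw [div_sub_div_same]
      congr 1
      rw [← Finset.sum_sub_distrib]
      exact Finset.sum_congr rfl fun t _ => by ring
    rw [hdiff, abs_div, abs_of_pos hS, div_le_iff₀ hS]
    calc |∑ t ∈ univ.filter (fun t => g t = j), α t * (θ t - binEst X t ω)|
        ≤ ∑ t ∈ univ.filter (fun t => g t = j), |α t * (θ t - binEst X t ω)| :=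
          Finset.abs_sum_le_sum_abs _ _
      _ = ∑ t ∈ univ.filter (fun t => g t = j), α t * |θ t - binEst X t ω| :=
          Finset.sum_congr rfl fun t _ => by rw [abs_mul, abs_of_pos (hα t)]
      _ ≤ ∑ t ∈ univ.filter (fun t => g t = j),
            (∑ u ∈ univ.filter (fun u => g u = j), α u) * |θ t - binEst X t ω| :=
          Finset.sum_le_sum fun t ht => mul_le_mul_of_nonneg_right
            (Finset.single_le_sum (fun u _ => (hα u).le) ht) (abs_nonneg _)
      _ = (∑ t ∈ univ.filter (fun t => g t = j), |θ t - binEst X t ω|) *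
            (∑ t ∈ univ.filter (fun t => g t = j), α t) := by
          rw [← Finset.mul_sum]; ring
  -- integrability of each weighted term
  have hmeasAvg : ∀ j, Measurable (fun ω => binAvg g α (fun t => binEst X t ω) j) := by
    intro j
    unfold binAvg
    exact (Finset.measurable_sum _ fun t _ => (hmeasEst t).const_mul (α t)).div_const _
  have habsint : ∀ j, Integrable
      (fun ω => |binAvg g α θ j - binAvg g α (fun t => binEst X t ω) j|) μ := by
    intro j
    refine integrable_of_bdd (measurable_const.sub (hmeasAvg j)).abs (C := (B : ℝ)) ?_
    intro ω
    rw [abs_abs]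
    calc |binAvg g α θ j - binAvg g α (fun t => binEst X t ω) j|
        ≤ ∑ t ∈ univ.filter (fun t => g t = j), |θ t - binEst X t ω| := hA ω j
      _ ≤ ∑ t ∈ univ.filter (fun t => g t = j), (1 : ℝ) :=
          Finset.sum_le_sum fun t _ => hDb t ω
      _ = ((univ.filter (fun t => g t = j)).card : ℝ) := by simp
      _ ≤ (B : ℝ) := by
          have hcard : (univ.filter (fun t => g t = j)).card ≤ B :=
            le_trans (Finset.card_filter_le _ _) (by simp)
          exact_mod_cast hcard
  -- per-output-bin integrated bound
  have hkey : ∀ j, ∫ ω, |binAvg g α θ j - binAvg g α (fun t => binEst X t ω) j| ∂μ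
      ≤ ((univ.filter (fun t => g t = j)).card : ℝ) * c := by
    intro j
    calc ∫ ω, |binAvg g α θ j - binAvg g α (fun t => binEst X t ω) j| ∂μ
        ≤ ∫ ω, ∑ t ∈ univ.filter (fun t => g t = j), |θ t - binEst X t ω| ∂μ := by
          refine integral_mono (habsint j)
            (integrable_finset_sum _ fun t _ => hDint t) (fun ω => hA ω j)
      _ = ∑ t ∈ univ.filter (fun t => g t = j), ∫ ω, |θ t - binEst X t ω| ∂μ :=
          integral_finset_sum _ fun t _ => hDint t
      _ ≤ ∑ t ∈ univ.filter (fun t => g t = j), (1 / (2 * Real.sqrt n)) :=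
          Finset.sum_le_sum fun t _ => hdev t
      _ = ((univ.filter (fun t => g t = j)).card : ℝ) * (1 / (2 * Real.sqrt n)) := by
          rw [Finset.sum_const, nsmul_eq_mul]
      _ ≤ ((univ.filter (fun t => g t = j)).card : ℝ) * c :=
          mul_le_mul_of_nonneg_left h_half_le_c (by positivity)
  -- main bound
  have main : ∫ ω, ∑ j : Fin J, w j *
      |binAvg g α θ j - binAvg g α (fun t => binEst X t ω) j| ∂μ
      ≤ (∑ j : Fin J, w j * ((univ.filter (fun t => g t = j)).card : ℝ)) * c := by
    calc ∫ ω, ∑ j : Fin J, w j *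
          |binAvg g α θ j - binAvg g α (fun t => binEst X t ω) j| ∂μ
        = ∑ j : Fin J, ∫ ω, w j *
            |binAvg g α θ j - binAvg g α (fun t => binEst X t ω) j| ∂μ :=
          integral_finset_sum _ fun j _ => (habsint j).const_mul _
      _ = ∑ j : Fin J, w j * ∫ ω,
            |binAvg g α θ j - binAvg g α (fun t => binEst X t ω) j| ∂μ :=
          Finset.sum_congr rfl fun j _ => integral_const_mul _ _
      _ ≤ ∑ j : Fin J, w j * (((univ.filter (fun t => g t = j)).card : ℝ) * c) :=
          Finset.sum_le_sum fun j _ => mul_le_mul_of_nonneg_left (hkey j) (hw0 j)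
      _ = (∑ j : Fin J, w j * ((univ.filter (fun t => g t = j)).card : ℝ)) * c := by
          rw [Finset.sum_mul]
          exact Finset.sum_congr rfl fun j _ => by ring
  refine ⟨main, fun κ hκ => ?_⟩
  refine le_trans main ?_
  refine mul_le_mul_of_nonneg_right ?_ hc0
  calc ∑ j : Fin J, w j * ((univ.filter (fun t => g t = j)).card : ℝ)
      ≤ ∑ j : Fin J, w j * κ :=
        Finset.sum_le_sum fun j _ => mul_le_mul_of_nonneg_left (hκ j) (hw0 j)
    _ = κ := by rw [← Finset.sum_mul, hw1, one_mul]
end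

section
/- Let B ≥ 1, let θ_1,…,θ_B ∈ [0,1] be pairwise distinct with S⁺ = ∑_{K=1}^B θ_K > 0 and S⁻ = ∑_{K=1}^B (1−θ_K) > 0, and let u_1,…,u_B ∈ [0,1]. Define AUC_base = ( ∑_{(K,L): K > L} θ_K(1−θ_L) + ∑_{K=1}^B u_K·θ_K(1−θ_K) ) / (S⁺·S⁻) and AUC_cal = ( ∑_{(K,L): θ_K > θ_L} θ_K(1−θ_L) + (1/2)·∑_{K=1}^B θ_K(1−θ_K) ) / (S⁺·S⁻). Then AUC_base − AUC_cal ≤ 1/(2B); in particular, in the large-sample limit the worst-case AUC loss of histogram-binning calibration is at most 1/(2B) = O(1/B). -/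
open Finset

/-- **Population AUC loss of histogram binning**: with `B` equal-frequency bins, pairwise
distinct bin positive-fractions `θ_K ∈ [0,1]`, within-bin ranking accuracies `u_K ∈ [0,1]`,
`S⁺ = ∑ θ_K > 0` and `S⁻ = ∑ (1−θ_K) > 0`, the AUC of the base classifier minus the AUC of
the calibrated classifier is at most `1/(2B)`. -/
theorem auc_loss_le (B : ℕ) (hB : 1 ≤ B)
    (θ : Fin B → ℝ) (hθ : ∀ K, θ K ∈ Set.Icc (0 : ℝ) 1)
    (hdist : Function.Injective θ)
    (hpos : 0 < ∑ K : Fin B, θ K) (hneg : 0 < ∑ K : Fin B, (1 - θ K))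
    (u : Fin B → ℝ) (hu : ∀ K, u K ∈ Set.Icc (0 : ℝ) 1) :
    ((∑ K : Fin B, ∑ L ∈ univ.filter (fun L => L < K), θ K * (1 - θ L))
        + ∑ K : Fin B, u K * (θ K * (1 - θ K))) /
      ((∑ K : Fin B, θ K) * (∑ K : Fin B, (1 - θ K)))
    - ((∑ K : Fin B, ∑ L : Fin B, (if θ K > θ L then θ K * (1 - θ L) else 0))
        + (1 / 2) * ∑ K : Fin B, θ K * (1 - θ K)) /
      ((∑ K : Fin B, θ K) * (∑ K : Fin B, (1 - θ K)))
    ≤ 1 / (2 * B) := by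
  set f : Fin B → Fin B → ℝ := fun K L => if θ K > θ L then θ K * (1 - θ L) else 0 with hf
  have hD : 0 < (∑ K : Fin B, θ K) * (∑ K : Fin B, (1 - θ K)) := mul_pos hpos hneg
  have hB0 : (0:ℝ) < 2 * B := by positivity
  rw [div_sub_div_same, div_le_div_iff₀ hD hB0, one_mul]
  set T : ℝ := ∑ K : Fin B, θ K * (1 - θ K) with hT
  -- decomposition of the calibrated cross-term sum over ordered pairs
  have hdec : ∑ K : Fin B, ∑ L : Fin B, f K L
      = ∑ K : Fin B, ∑ L ∈ univ.filter (fun L => L < K), (f K L + f L K) := by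
    have h1 : ∀ K : Fin B, ∑ L : Fin B, f K L
        = ∑ L ∈ univ.filter (fun L => L < K), f K L
          + ∑ L ∈ univ.filter (fun L => K < L), f K L := by
      intro K
      rw [← Finset.sum_filter_add_sum_filter_not univ (fun L => L < K) (f K ·)]
      congr 1
      apply (Finset.sum_subset ?_ ?_).symm
      · intro L hL
        simp only [mem_filter, mem_univ, true_and] at hL ⊢
        exact not_lt.mpr hL.le
      · intro L hL hL2
        simp only [mem_filter, mem_univ, true_and, not_lt] at hL hL2
        have : L = K := le_antisymm hL2 hL
        subst this
        simp [hf]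
    have h2 : ∑ K : Fin B, ∑ L ∈ univ.filter (fun L => K < L), f K L
        = ∑ K : Fin B, ∑ L ∈ univ.filter (fun L => L < K), f L K := by
      apply Finset.sum_comm'
      intro K L
      simp only [mem_univ, mem_filter, true_and, and_true]
    simp only [h1, Finset.sum_add_distrib, h2, Finset.sum_add_distrib]
  -- cross-bin pairs: base ≤ calibrated
  have hcross : (∑ K : Fin B, ∑ L ∈ univ.filter (fun L => L < K), θ K * (1 - θ L))
      ≤ ∑ K : Fin B, ∑ L : Fin B, f K L := by
    rw [hdec]
    apply Finset.sum_le_sum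
    intro K _
    apply Finset.sum_le_sum
    intro L hL
    simp only [mem_filter, mem_univ, true_and] at hL
    have hne : θ K ≠ θ L := fun h => (ne_of_gt hL) (hdist h)
    rcases lt_or_gt_of_ne hne with h | h
    · -- θ K < θ L : calibrated gets θ L * (1 - θ K) ≥ θ K * (1 - θ L)
      have e1 : f K L = 0 := by simp [hf, not_lt.mpr h.le]
      have e2 : f L K = θ L * (1 - θ K) := by simp [hf, h]
      rw [e1, e2]
      nlinarith
    · have e1 : f K L = θ K * (1 - θ L) := by simp [hf, h]
      have e2 : f L K = 0 := by simp [hf, not_lt.mpr h.le]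
      rw [e1, e2]
      linarith
  -- within-bin terms
  have hwithin : ∑ K : Fin B, u K * (θ K * (1 - θ K)) ≤ T := by
    apply Finset.sum_le_sum
    intro K _
    have hx : 0 ≤ θ K * (1 - θ K) :=
      mul_nonneg (hθ K).1 (by linarith [(hθ K).2])
    nlinarith [mul_nonneg (sub_nonneg.mpr (hu K).2) hx]
  -- Cauchy–Schwarz: B * T ≤ S⁺ * S⁻
  have hTle : (B : ℝ) * T ≤ (∑ K : Fin B, θ K) * (∑ K : Fin B, (1 - θ K)) := by
    have hsq : (∑ K : Fin B, θ K * 1) ^ 2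
        ≤ (∑ K : Fin B, θ K ^ 2) * (∑ K : Fin B, (1:ℝ) ^ 2) :=
      Finset.sum_mul_sq_le_sq_mul_sq univ θ (fun _ => 1)
    have hone : (∑ K : Fin B, (1:ℝ) ^ 2) = B := by simp
    have hneg' : (∑ K : Fin B, (1 - θ K)) = B - ∑ K : Fin B, θ K := by
      rw [Finset.sum_sub_distrib]
      simp
    have hTeq : T = (∑ K : Fin B, θ K) - ∑ K : Fin B, θ K ^ 2 := by
      rw [hT, ← Finset.sum_sub_distrib]
      apply Finset.sum_congr rfl
      intro K _; ring
    rw [hneg', hTeq]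
    simp only [mul_one] at hsq
    rw [hone] at hsq
    nlinarith
  have hT0 : 0 ≤ T := by
    apply Finset.sum_nonneg
    intro K _
    nlinarith [(hθ K).1, (hθ K).2]
  have h1 : ((∑ K : Fin B, ∑ L ∈ univ.filter (fun L => L < K), θ K * (1 - θ L))
        + ∑ K : Fin B, u K * (θ K * (1 - θ K)))
      - ((∑ K : Fin B, ∑ L : Fin B, f K L) + (1 / 2) * T) ≤ T / 2 := by
    linarith
  calc (((∑ K : Fin B, ∑ L ∈ univ.filter (fun L => L < K), θ K * (1 - θ L))
        + ∑ K : Fin B, u K * (θ K * (1 - θ K)))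
      - ((∑ K : Fin B, ∑ L : Fin B, f K L) + (1 / 2) * T)) * (2 * B)
      ≤ (T / 2) * (2 * B) := mul_le_mul_of_nonneg_right h1 hB0.le
    _ = (B : ℝ) * T := by ring
    _ ≤ _ := hTle
end
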